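/- Let τ = (1 + √5)/2 and λ_k = (⌈k/τ⌉ + kτ)/τ² for k ∈ ℤ. Then the set of pairs of consecutive gaps { (λ_{k+1} − λ_k, λ_{k+2} − λ_{k+1}) : k ∈ ℤ } equals exactly { (1, 1), (1, 1/τ), (1/τ, 1) }; in particular there is no k with λ_{k+1} − λ_k = 1/τ and λ_{k+2} − λ_{k+1} = 1/τ (no word SS occurs in the Fibonacci chain). -/
import Mathlib


open MeasureTheory Set Filter

noncomputable section

/-- The golden mean `τ = (1 + √5)/2`. -/
def tau : ℝ := (1 + Real.sqrt 5) / 2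

/-- The cut-and-project model set `Σ^Ω = { a + bτ : a, b ∈ ℤ, a - b/τ ∈ Ω }`. -/
def SigmaSet (Ω : Set ℝ) : Set ℝ :=
  {x | ∃ a b : ℤ, x = (a : ℝ) + (b : ℝ) * tau ∧ (a : ℝ) - (b : ℝ) / tau ∈ Ω}

/-- The increasing enumeration `λ_k = (⌈k/τ⌉ + kτ)/τ²` of the rescaled Fibonacci
chain `Σ^{[0,τ²)}`. -/
def fibChain (k : ℤ) : ℝ := ((⌈(k : ℝ) / tau⌉ : ℝ) + (k : ℝ) * tau) / tau ^ 2

lemma sqrt5_sq : Real.sqrt 5 ^ 2 = 5 := Real.sq_sqrt (by norm_num)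

lemma sqrt5_lt : Real.sqrt 5 < 3 := by
  nlinarith [sqrt5_sq, Real.sqrt_nonneg 5]

lemma sqrt5_gt : 2 < Real.sqrt 5 := by
  nlinarith [sqrt5_sq, Real.sqrt_nonneg 5]

lemma one_lt_tau : 1 < tau := by unfold tau; nlinarith [sqrt5_gt]

lemma tau_lt_two : tau < 2 := by unfold tau; nlinarith [sqrt5_lt]

lemma tau_pos : 0 < tau := lt_trans one_pos one_lt_tau

lemma tau_sq : tau ^ 2 = tau + 1 := by
  unfold tau; nlinarith [sqrt5_sq]

/-- The ceiling increment at step `k`. -/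
def dstep (k : ℤ) : ℤ := ⌈((k : ℝ) + 1) / tau⌉ - ⌈(k : ℝ) / tau⌉

lemma tau_ne : tau ≠ 0 := ne_of_gt tau_pos

lemma gap_eq (k : ℤ) :
    fibChain (k + 1) - fibChain k = ((dstep k : ℝ) + tau) / tau ^ 2 := by
  unfold fibChain dstep
  have h2 : tau ^ 2 ≠ 0 := pow_ne_zero 2 tau_ne
  push_cast
  field_simp
  ring

lemma dstep_cases (k : ℤ) : dstep k = 0 ∨ dstep k = 1 := by
  have h0 : (0:ℝ) < 1 / tau := div_pos one_pos tau_pos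
  have h1 : (1:ℝ) / tau < 1 := by
    rw [div_lt_one tau_pos]; exact one_lt_tau
  have hle : ⌈(k : ℝ) / tau⌉ ≤ ⌈((k : ℝ) + 1) / tau⌉ := by
    apply Int.ceil_le_ceil
    rw [add_div]
    nlinarith
  have hge : ⌈((k : ℝ) + 1) / tau⌉ ≤ ⌈(k : ℝ) / tau⌉ + 1 := by
    rw [Int.ceil_le]
    push_cast
    have := Int.le_ceil ((k : ℝ) / tau)
    rw [add_div]
    nlinarith
  unfold dstep
  omega

lemma no_two_zero (k : ℤ) : ¬(dstep k = 0 ∧ dstep (k + 1) = 0) := by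
  rintro ⟨h1, h2⟩
  unfold dstep at h1 h2
  push_cast at h2
  have key : ⌈(k : ℝ) / tau⌉ < ⌈((k : ℝ) + 1 + 1) / tau⌉ := by
    rw [Int.lt_ceil]
    have hc := Int.ceil_lt_add_one ((k : ℝ) / tau)
    have h2t : 1 < 2 / tau := by
      rw [lt_div_iff₀ tau_pos]; nlinarith [tau_lt_two]
    have : ((k : ℝ) + 1 + 1) / tau = (k : ℝ) / tau + 2 / tau := by ring
    rw [this]
    nlinarith
  omega

lemma gap_of_dstep_zero {k : ℤ} (h : dstep k = 0) :
    fibChain (k + 1) - fibChain k = 1 / tau := by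
  rw [gap_eq, h]
  push_cast
  rw [zero_add, pow_two, div_eq_div_iff (mul_ne_zero tau_ne tau_ne) tau_ne]
  ring

lemma gap_of_dstep_one {k : ℤ} (h : dstep k = 1) :
    fibChain (k + 1) - fibChain k = 1 := by
  rw [gap_eq, h, tau_sq]
  push_cast
  rw [div_eq_one_iff_eq (by linarith [tau_pos] : tau + 1 ≠ 0)]
  ring

-- explicit ceiling computations for witnesses
lemma ceil0 : ⌈(0:ℝ) / tau⌉ = 0 := by
  rw [zero_div]; exact Int.ceil_zero

lemma ceil1 : ⌈(1:ℝ) / tau⌉ = 1 := by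
  rw [Int.ceil_eq_iff]
  constructor
  · push_cast; linarith [div_pos one_pos tau_pos]
  · push_cast; rw [div_le_one tau_pos]; linarith [one_lt_tau]

lemma ceil2 : ⌈(2:ℝ) / tau⌉ = 2 := by
  rw [Int.ceil_eq_iff]
  constructor
  · push_cast; rw [lt_div_iff₀ tau_pos]; nlinarith [tau_lt_two]
  · push_cast; rw [div_le_iff₀ tau_pos]; nlinarith [one_lt_tau]

lemma ceil3 : ⌈(3:ℝ) / tau⌉ = 2 := by
  rw [Int.ceil_eq_iff]
  have h32 : (3:ℝ) ≤ 2 * tau := by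
    unfold tau; nlinarith [sqrt5_gt]
  constructor
  · push_cast; rw [lt_div_iff₀ tau_pos]; nlinarith [tau_lt_two]
  · push_cast; rw [div_le_iff₀ tau_pos]; nlinarith

lemma ceil4 : ⌈(4:ℝ) / tau⌉ = 3 := by
  rw [Int.ceil_eq_iff]
  have h32 : (3:ℝ) ≤ 2 * tau := by
    unfold tau; nlinarith [sqrt5_gt]
  constructor
  · push_cast; rw [lt_div_iff₀ tau_pos]; nlinarith [tau_lt_two]
  · push_cast; rw [div_le_iff₀ tau_pos]; nlinarith

lemma dstep0 : dstep 0 = 1 := by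
  unfold dstep
  rw [show (((0:ℤ)):ℝ) + 1 = 1 by norm_num, show (((0:ℤ)):ℝ) = 0 by norm_num,
    ceil1, ceil0]; norm_num

lemma dstep1 : dstep 1 = 1 := by
  unfold dstep
  rw [show (((1:ℤ)):ℝ) + 1 = 2 by norm_num, show (((1:ℤ)):ℝ) = 1 by norm_num,
    ceil1, ceil2]; norm_num

lemma dstep2 : dstep 2 = 0 := by
  unfold dstep
  rw [show (((2:ℤ)):ℝ) + 1 = 3 by norm_num, show (((2:ℤ)):ℝ) = 2 by norm_num,
    ceil2, ceil3]; norm_num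

lemma dstep3 : dstep 3 = 1 := by
  unfold dstep
  rw [show (((3:ℤ)):ℝ) + 1 = 4 by norm_num, show (((3:ℤ)):ℝ) = 3 by norm_num,
    ceil3, ceil4]; norm_num

/-- the set of pairs of consecutive gaps of the Fibonacci chain is
exactly `{(1,1), (1,1/τ), (1/τ,1)}`; in particular no word `SS` occurs. -/
theorem statement10 :
    {p : ℝ × ℝ | ∃ k : ℤ,
        p = (fibChain (k + 1) - fibChain k, fibChain (k + 2) - fibChain (k + 1))} =
      {((1 : ℝ), (1 : ℝ)), ((1 : ℝ), 1 / tau), (1 / tau, (1 : ℝ))} ∧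
    ¬∃ k : ℤ, fibChain (k + 1) - fibChain k = 1 / tau ∧
        fibChain (k + 2) - fibChain (k + 1) = 1 / tau := by
  have hgap : ∀ k : ℤ, fibChain (k + 2) - fibChain (k + 1)
      = fibChain ((k + 1) + 1) - fibChain (k + 1) := by
    intro k; norm_num; ring_nf
  have key : ∀ k : ℤ, ¬(fibChain (k + 1) - fibChain k = 1 / tau ∧
      fibChain (k + 2) - fibChain (k + 1) = 1 / tau) := by
    intro k ⟨h1, h2⟩
    rw [hgap k] at h2
    have hne : (1:ℝ) ≠ 1 / tau := by
      rw [ne_eq, eq_div_iff (ne_of_gt tau_pos)]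
      nlinarith [one_lt_tau]
    have hd1 : dstep k = 0 := by
      rcases dstep_cases k with h | h
      · exact h
      · rw [gap_of_dstep_one h] at h1; exact absurd h1 hne
    have hd2 : dstep (k + 1) = 0 := by
      rcases dstep_cases (k + 1) with h | h
      · exact h
      · rw [gap_of_dstep_one h] at h2; exact absurd h2 hne
    exact no_two_zero k ⟨hd1, hd2⟩
  constructor
  · ext p
    simp only [Set.mem_setOf_eq, Set.mem_insert_iff, Set.mem_singleton_iff]
    constructor
    · rintro ⟨k, rfl⟩
      rw [hgap k]
      rcases dstep_cases k with h1 | h1 <;> rcases dstep_cases (k + 1) with h2 | h2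
      · exact absurd ⟨h1, h2⟩ (no_two_zero k)
      · right; right
        rw [gap_of_dstep_zero h1, gap_of_dstep_one h2]
      · right; left
        rw [gap_of_dstep_one h1, gap_of_dstep_zero h2]
      · left
        rw [gap_of_dstep_one h1, gap_of_dstep_one h2]
    · rintro (h | h | h)
      · refine ⟨0, ?_⟩
        rw [h, hgap 0]
        rw [gap_of_dstep_one dstep0, gap_of_dstep_one (by norm_num [dstep1] : dstep (0 + 1) = 1)]
      · refine ⟨1, ?_⟩
        rw [h, hgap 1]
        rw [gap_of_dstep_one dstep1, gap_of_dstep_zero (by norm_num [dstep2] : dstep (1 + 1) = 0)]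
      · refine ⟨2, ?_⟩
        rw [h, hgap 2]
        rw [gap_of_dstep_zero dstep2, gap_of_dstep_one (by norm_num [dstep3] : dstep (2 + 1) = 1)]
  · rintro ⟨k, h1, h2⟩
    exact key k ⟨h1, h2⟩
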